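/- Let 0 < σ < n/2, e ∈ ℝ^n nonzero, R > 0 with R|e| > 10, and set U(y) = (1 + |y − Re|²)^{−(n−2σ)/2} and λ₀ = R|e| − 2. Then there exists C = C(n, σ, R|e|) > 0 such that U(y) − U^{λ₀}(y) ≥ C·(|y|² − λ₀²)·|y|^{−(n−2σ+2)} for all |y| ≥ λ₀, where U^{λ}(y) = (λ/|y|)^{n−2σ}·U(λ²y/|y|²). -/

import Mathlib

open Real Set

set_option maxHeartbeats 1000000

lemma bern_aux {q A B : ℝ} (hq : 0 < q) (hA : 0 < A) (hAB : A ≤ B) :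
    q * B ^ (-(q+1)) * (B - A) ≤ A ^ (-q) - B ^ (-q) := by
  rcases eq_or_lt_of_le hAB with rfl | hlt
  · simp
  have hB : 0 < B := hA.trans hlt
  obtain ⟨c, hc, hderiv⟩ := exists_hasDerivAt_eq_slope (fun x => x ^ (-q))
      (fun x => (-q) * x ^ (-q - 1)) hlt
      (ContinuousOn.rpow_const continuousOn_id
        (fun x hx => Or.inl (ne_of_gt (lt_of_lt_of_le hA hx.1))))
      (fun x hx => Real.hasDerivAt_rpow_const (Or.inl (ne_of_gt (hA.trans hx.1))))
  have hc0 : 0 < c := hA.trans hc.1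
  have heq : A ^ (-q) - B ^ (-q) = q * c ^ (-(q+1)) * (B - A) := by
    have hBA : B - A ≠ 0 := by linarith
    have := hderiv
    have h2 : (-q) * c ^ (-q - 1) * (B - A) = B ^ (-q) - A ^ (-q) := by
      rw [this]; field_simp
    have : -(q+1) = -q - 1 := by ring
    rw [this]; linarith [h2]
  rw [heq]
  have hcB : B ^ (-(q+1)) ≤ c ^ (-(q+1)) :=
    Real.rpow_le_rpow_of_nonpos hc0 hc.2.le (by linarith)
  have hBA0 : 0 ≤ B - A := by linarith
  have := mul_le_mul_of_nonneg_right (mul_le_mul_of_nonneg_left hcB hq.le) hBA0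
  linarith

lemma sq_rpow_half {x : ℝ} (hx : 0 ≤ x) (p : ℝ) : ((x^2 : ℝ)) ^ (p/2) = x ^ p := by
  rw [← Real.rpow_natCast x 2, ← Real.rpow_mul hx]
  congr 1
  push_cast
  ring

theorem stmt_9 (n : ℕ) (σ : ℝ) (hσ : 0 < σ) (hn : 2 * σ < n)
    (e : EuclideanSpace ℝ (Fin n)) (he : e ≠ 0) (R : ℝ) (hR : 0 < R) (hRe : 10 < R * ‖e‖)
    (U : EuclideanSpace ℝ (Fin n) → ℝ)
    (hU : ∀ y, U y = (1 + ‖y - R • e‖ ^ 2) ^ (-(((n : ℝ) - 2 * σ) / 2)))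
    (lam₀ : ℝ) (hlam₀ : lam₀ = R * ‖e‖ - 2) :
    ∃ C : ℝ, 0 < C ∧ ∀ y : EuclideanSpace ℝ (Fin n), lam₀ ≤ ‖y‖ →
      C * (‖y‖ ^ 2 - lam₀ ^ 2) * ‖y‖ ^ (-((n : ℝ) - 2 * σ + 2))
        ≤ U y - (lam₀ / ‖y‖) ^ ((n : ℝ) - 2 * σ) * U ((lam₀ ^ 2 / ‖y‖ ^ 2) • y) := by
  set m : ℝ := (n : ℝ) - 2 * σ with hm_def
  have hm : 0 < m := by simp only [hm_def]; linarith
  have hl8 : 8 < lam₀ := by rw [hlam₀]; linarith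
  have hl0 : 0 < lam₀ := by linarith
  set c₀ : ℝ := (R * ‖e‖)^2 - lam₀^2 + 1 with hc₀_def
  have hc₀ : 0 < c₀ := by simp only [hc₀_def, hlam₀]; nlinarith
  set K : ℝ := 1 + (lam₀ + R * ‖e‖)^2 with hK_def
  have hK : 0 < K := by positivity
  have hKl : 0 < K / lam₀^2 := by positivity
  refine ⟨(m/2) * (c₀ / lam₀^2) * (K/lam₀^2) ^ (-(m/2+1)), by positivity, fun y hy => ?_⟩
  have hy0 : 0 < ‖y‖ := lt_of_lt_of_le hl0 hy
  set z := ((lam₀^2 / ‖y‖^2) • y) with hz_def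
  set A : ℝ := 1 + ‖y - R • e‖^2 with hA_def
  set D : ℝ := 1 + ‖z - R • e‖^2 with hD_def
  set B : ℝ := (‖y‖^2 / lam₀^2) * D with hB_def
  have hA1 : (1:ℝ) ≤ A := by
    have := sq_nonneg ‖y - R • e‖
    simp only [hA_def]; linarith
  have hA0 : 0 < A := by linarith
  have hD0 : 0 < D := by
    have := sq_nonneg ‖z - R • e‖
    simp only [hD_def]; linarith
  have hRe_norm : ‖R • e‖ = R * ‖e‖ := by
    rw [norm_smul, Real.norm_eq_abs, abs_of_pos hR]
  have hz_norm : ‖z‖ = lam₀^2 / ‖y‖ := by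
    rw [hz_def, norm_smul, Real.norm_eq_abs, abs_of_pos (by positivity)]
    field_simp
  have hinner_z : (inner ℝ z (R • e) : ℝ) = (lam₀^2/‖y‖^2) * (R * inner ℝ y e) := by
    rw [hz_def, real_inner_smul_left, real_inner_smul_right]
  have e1 : ‖y - R • e‖^2 = ‖y‖^2 - 2 * (R * inner ℝ y e) + (R * ‖e‖)^2 := by
    rw [@norm_sub_sq_real, real_inner_smul_right, hRe_norm]
  have e2 : ‖z - R • e‖^2
      = (lam₀^2/‖y‖)^2 - 2 * ((lam₀^2/‖y‖^2) * (R * inner ℝ y e)) + (R * ‖e‖)^2 := by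
    rw [@norm_sub_sq_real, hinner_z, hRe_norm, hz_norm]
  have hid : B - A = (‖y‖^2 - lam₀^2) * c₀ / lam₀^2 := by
    rw [hB_def, hA_def, hD_def, e1, e2, hc₀_def]
    field_simp
    ring
  have hyl : lam₀^2 ≤ ‖y‖^2 := by nlinarith
  have hAB : A ≤ B := by
    have h : 0 ≤ (‖y‖^2 - lam₀^2) * c₀ / lam₀^2 := by
      apply div_nonneg _ (by positivity)
      exact mul_nonneg (by linarith) hc₀.le
    linarith [hid]
  have hB0 : 0 < B := lt_of_lt_of_le hA0 hAB
  have hD_le : D ≤ K := by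
    have h1 : ‖z - R • e‖ ≤ lam₀ + R * ‖e‖ := by
      calc ‖z - R • e‖ ≤ ‖z‖ + ‖R • e‖ := norm_sub_le _ _
        _ ≤ lam₀ + R * ‖e‖ := by
            rw [hz_norm, hRe_norm]
            have h2 : lam₀^2 / ‖y‖ ≤ lam₀ := by
              rw [div_le_iff₀ hy0]; nlinarith
            linarith
    simp only [hD_def, hK_def]
    nlinarith [norm_nonneg (z - R • e)]
  have hB_le : B ≤ (K / lam₀^2) * ‖y‖^2 := by
    rw [hB_def]
    rw [div_mul_eq_mul_div, div_mul_eq_mul_div, div_le_div_iff₀ (by positivity) (by positivity)]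
    calc ‖y‖^2 * D * lam₀^2 = D * (‖y‖^2 * lam₀^2) := by ring
      _ ≤ K * (‖y‖^2 * lam₀^2) := mul_le_mul_of_nonneg_right hD_le (by positivity)
      _ = K * ‖y‖^2 * lam₀^2 := by ring
  have hfrac : ((‖y‖^2 / lam₀^2 : ℝ)) ^ (-(m/2)) = (lam₀ / ‖y‖) ^ m := by
    rw [Real.rpow_neg (by positivity), Real.div_rpow (by positivity) (by positivity),
      sq_rpow_half (norm_nonneg y), sq_rpow_half hl0.le, inv_div,
      ← Real.div_rpow hl0.le (norm_nonneg y)]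
  have hkelvin : (lam₀ / ‖y‖) ^ m * D ^ (-(m/2)) = B ^ (-(m/2)) := by
    rw [hB_def, Real.mul_rpow (by positivity) hD0.le, hfrac]
  have hUy : U y = A ^ (-(m/2)) := by rw [hU y, hA_def]
  have hUz : U z = D ^ (-(m/2)) := by rw [hU z, hD_def]
  rw [hUy, hUz, hkelvin]
  have hbern := bern_aux (q := m/2) (by linarith) hA0 hAB
  have hysq : ((‖y‖^2 : ℝ)) ^ (-(m/2+1)) = ‖y‖ ^ (-(m+2)) := by
    rw [show -(m/2+1) = (-(m+2))/2 by ring, sq_rpow_half (norm_nonneg y)]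
  have hBpow : (K/lam₀^2) ^ (-(m/2+1)) * ‖y‖ ^ (-(m+2)) ≤ B ^ (-(m/2+1)) := by
    have h1 : ((K/lam₀^2) * ‖y‖^2) ^ (-(m/2+1)) ≤ B ^ (-(m/2+1)) :=
      Real.rpow_le_rpow_of_nonpos hB0 hB_le (by linarith)
    rw [Real.mul_rpow hKl.le (by positivity), hysq] at h1
    exact h1
  have key : m/2 * (c₀/lam₀^2) * (K/lam₀^2) ^ (-(m/2+1)) * (‖y‖^2 - lam₀^2) * ‖y‖ ^ (-(m+2))
      ≤ m/2 * B ^ (-(m/2+1)) * (B - A) := by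
    rw [hid]
    have hpos : 0 ≤ m/2 * (‖y‖^2 - lam₀^2) / lam₀^2 * c₀ := by
      apply mul_nonneg _ hc₀.le
      apply div_nonneg _ (by positivity)
      exact mul_nonneg (by linarith) (by linarith)
    calc m/2 * (c₀/lam₀^2) * (K/lam₀^2) ^ (-(m/2+1)) * (‖y‖^2 - lam₀^2) * ‖y‖ ^ (-(m+2))
        = (m/2 * (‖y‖^2 - lam₀^2) / lam₀^2 * c₀)
            * ((K/lam₀^2) ^ (-(m/2+1)) * ‖y‖ ^ (-(m+2))) := by ring
      _ ≤ (m/2 * (‖y‖^2 - lam₀^2) / lam₀^2 * c₀) * B ^ (-(m/2+1)) :=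
          mul_le_mul_of_nonneg_left hBpow hpos
      _ = m/2 * B ^ (-(m/2+1)) * ((‖y‖^2 - lam₀^2) * c₀ / lam₀^2) := by ring
  calc (m/2) * (c₀/lam₀^2) * (K/lam₀^2) ^ (-(m/2+1)) * (‖y‖^2 - lam₀^2) * ‖y‖ ^ (-(m+2))
      ≤ m/2 * B ^ (-(m/2+1)) * (B - A) := key
    _ ≤ A ^ (-(m/2)) - B ^ (-(m/2)) := hbern
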